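/- Let {X_k} be a sequence of uniformly separated subsets of ℝ^n (|λ−λ'| ≥ δ for distinct points of X_k, with δ independent of k) such that for some M_0 and all M ≥ M_0, #(X_k ∩ B(0,M)) ≥ c·M^n for all large k. Then there exists a nonempty (indeed infinite) set X ⊂ ℝ^n, uniformly separated with constant δ, that is a weak limit of a subsequence of {X_k}: every point of X is a limit of points of the X_k and X satisfies #(X ∩ B(0,M)) ≥ c'·M^n for all large M. -/

import Mathlib

open MeasureTheory Metric Real
open scoped ENNReal BigOperators

noncomputable section

abbrev E (n : ℕ) := EuclideanSpace ℝ (Fin n)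

/-- Evaluation of a multivariate polynomial at a point of `ℝⁿ`. -/
noncomputable def peval {n : ℕ} (p : MvPolynomial (Fin n) ℝ) (x : E n) : ℝ :=
  MvPolynomial.eval (fun i => x i) p

/-- The anisotropic metric on the closed unit ball. -/
noncomputable def rho {n : ℕ} (x y : E n) : ℝ :=
  Real.arccos ((inner ℝ x y : ℝ) + Real.sqrt (1 - ‖x‖^2) * Real.sqrt (1 - ‖y‖^2))

/-- The measure `(1-|x|²)^{a-1/2} dV` on the closed unit ball. -/
noncomputable def muA (n : ℕ) (a : ℝ) : Measure (E n) :=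
  (volume.restrict (closedBall 0 1)).withDensity
    (fun x => ENNReal.ofReal ((1 - ‖x‖^2) ^ (a - 1/2)))

/-- Ball of radius `r` around `x` in the anisotropic metric `rho`. -/
noncomputable def rhoBall {n : ℕ} (x : E n) (r : ℝ) : Set (E n) :=
  {y ∈ closedBall (0 : E n) 1 | rho x y < r}

open Filter in
section
open scoped Topology
open Filter

namespace Stmt17Aux

variable {n : ℕ}

/-- compactification map -/
noncomputable def hmap (x : E n) : E n := (1 + ‖x‖)⁻¹ • x

noncomputable def gmap (y : E n) : E n := (1 - ‖y‖)⁻¹ • y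

lemma norm_hmap (x : E n) : ‖hmap x‖ = ‖x‖ / (1 + ‖x‖) := by
  have h : (0:ℝ) < 1 + ‖x‖ := by positivity
  rw [hmap, norm_smul, Real.norm_eq_abs, abs_inv, abs_of_pos h, inv_mul_eq_div]

lemma norm_hmap_lt_one (x : E n) : ‖hmap x‖ < 1 := by
  have h : (0:ℝ) < 1 + ‖x‖ := by positivity
  rw [norm_hmap, div_lt_one h]; linarith

lemma hmap_mem (x : E n) : hmap x ∈ closedBall (0 : E n) 1 := by
  rw [mem_closedBall_zero_iff]; exact (norm_hmap_lt_one x).le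

lemma gmap_hmap (x : E n) : gmap (hmap x) = x := by
  have h : (0:ℝ) < 1 + ‖x‖ := by positivity
  have h1 : 1 - ‖hmap x‖ = (1 + ‖x‖)⁻¹ := by
    rw [norm_hmap]; field_simp; ring
  rw [gmap, h1, inv_inv, hmap, smul_smul, mul_inv_cancel₀ h.ne', one_smul]

lemma continuousAt_gmap {y : E n} (hy : ‖y‖ < 1) : ContinuousAt (gmap (n := n)) y := by
  have h : 1 - ‖y‖ ≠ 0 := by linarith
  exact (((continuousAt_const.sub continuous_norm.continuousAt).inv₀ h).smul continuousAt_id)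

lemma tendsto_of_hmap_tendsto {u : ℕ → E n} {L : E n} (hL : ‖L‖ < 1)
    (h : Tendsto (fun j => hmap (u j)) atTop (𝓝 L)) :
    Tendsto u atTop (𝓝 (gmap L)) := by
  have := ((continuousAt_gmap hL).tendsto.comp h)
  refine this.congr fun j => ?_
  simp [Function.comp, gmap_hmap]

lemma mono_aux {a b : ℝ} (ha : 0 ≤ a) (hab : a ≤ b) : a / (1 + a) ≤ b / (1 + b) := by
  have h1 : (0:ℝ) < 1 + a := by linarith
  have h2 : (0:ℝ) < 1 + b := by linarith
  rw [div_le_div_iff₀ h1 h2]; nlinarith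

lemma norm_blowup {u : ℕ → E n} {L : E n} (hL : ‖L‖ = 1)
    (h : Tendsto (fun j => hmap (u j)) atTop (𝓝 L)) (R : ℝ) :
    ∀ᶠ j in atTop, R < ‖u j‖ := by
  set R' := max R 0 with hR'
  have hR'0 : 0 ≤ R' := le_max_right _ _
  have hth : R' / (1 + R') < 1 := by
    rw [div_lt_one (by linarith)]; linarith
  have hnorm : Tendsto (fun j => ‖hmap (u j)‖) atTop (𝓝 1) := by
    have := h.norm; rwa [hL] at this
  filter_upwards [hnorm.eventually_const_lt hth] with j hj
  by_contra hcon
  push_neg at hcon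
  have hle : ‖u j‖ ≤ R' := le_trans hcon (le_max_left _ _)
  have := mono_aux (norm_nonneg (u j)) hle
  rw [← norm_hmap] at this
  linarith

/-- Packing bound: uniformly separated subsets of a ball are finite with bounded cardinality. -/
lemma packing (n : ℕ) {δ : ℝ} (hδ : 0 < δ) (R : ℝ) :
    ∃ N : ℕ, ∀ s : Set (E n), (∀ x ∈ s, ∀ y ∈ s, x ≠ y → δ ≤ dist x y) →
      s ⊆ ball 0 R → s.Finite ∧ s.ncard ≤ N := by
  classical
  obtain ⟨t, -, htf, hcov⟩ := (isCompact_closedBall (0 : E n) R).finite_cover_balls (half_pos hδ)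
  refine ⟨t.ncard, fun s hsep hsub => ?_⟩
  have hg : ∀ x ∈ s, ∃ y ∈ t, x ∈ ball y (δ/2) := by
    intro x hx
    have : x ∈ ⋃ y ∈ t, ball y (δ/2) := hcov (ball_subset_closedBall (hsub hx))
    simpa using this
  choose! g hg1 hg2 using hg
  have hinj : Set.InjOn g s := by
    intro a ha b hb hab
    by_contra hne
    have h1 := hsep a ha b hb hne
    have da := mem_ball.mp (hg2 a ha)
    have db := mem_ball.mp (hg2 b hb)
    have db' : dist (g a) b < δ/2 := by rw [hab, dist_comm]; exact db
    have htr := dist_triangle a (g a) b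
    linarith
  have him : g '' s ⊆ t := by rintro - ⟨a, ha, rfl⟩; exact hg1 a ha
  have hfin : s.Finite := Set.Finite.of_finite_image (htf.subset him) hinj
  exact ⟨hfin, Set.ncard_le_ncard_of_injOn g hg1 hinj htf⟩

/-- Enumerate a finite subset of `s` (with padding) by indices below `N`. -/
lemma enum_exists (s A : Set (E n)) (hs : s.Nonempty) (hA : A.Finite) (hAs : A ⊆ s)
    (N : ℕ) (hN : A.ncard ≤ N) :
    ∃ f : ℕ → E n, (∀ i, f i ∈ s) ∧ A ⊆ f '' (Set.Iio N) := by
  classical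
  obtain ⟨x₀, hx₀⟩ := hs
  set l := hA.toFinset.toList with hl
  have hlen : l.length = A.ncard := by
    rw [hl, Finset.length_toList, Set.ncard_eq_toFinset_card _ hA]
  refine ⟨fun i => if h : i < l.length then l.get ⟨i, h⟩ else x₀, fun i => ?_, fun a ha => ?_⟩
  · by_cases h : i < l.length
    · simp only [dif_pos h]
      exact hAs (hA.mem_toFinset.mp (Finset.mem_toList.mp (l.get_mem ⟨i, h⟩)))
    · simp only [dif_neg h]; exact hx₀
  · have hal : a ∈ l := by rw [hl, Finset.mem_toList, Set.Finite.mem_toFinset]; exact ha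
    obtain ⟨idx, hidx⟩ := List.mem_iff_get.mp hal
    refine ⟨idx.1, ?_, ?_⟩
    · have := idx.2; rw [Set.mem_Iio]; omega
    · simp only [idx.2, dif_pos, Fin.eta]; exact hidx

end Stmt17Aux

end

open Filter in
/-- a sequence of uniformly `δ`-separated sets `X_k ⊂ ℝⁿ` with uniform lower
counting bound `#(X_k ∩ B(0,M)) ≥ c Mⁿ` (for `M ≥ M₀`, `k` large) has a subsequence
converging weakly to an infinite, uniformly `δ`-separated set `Y`: every point of `Y` is a
limit of points of the `X_{φ(j)}`, and `Y` satisfies `#(Y ∩ B(0,M)) ≥ c' Mⁿ` for large `M`. -/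
theorem stmt17 (n : ℕ) (hn : 1 ≤ n) (X : ℕ → Set (E n)) (δ : ℝ) (hδ : 0 < δ)
    (hsep : ∀ k, ∀ x ∈ X k, ∀ y ∈ X k, x ≠ y → δ ≤ dist x y)
    (c : ℝ) (hc : 0 < c) (M₀ : ℝ)
    (hcount : ∀ M : ℝ, M₀ ≤ M → ∃ k₀ : ℕ, ∀ k : ℕ, k₀ ≤ k →
      c * M^n ≤ ((X k ∩ Metric.ball 0 M).ncard : ℝ)) :
    ∃ (Y : Set (E n)) (φ : ℕ → ℕ), StrictMono φ ∧ Y.Infinite ∧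
      (∀ x ∈ Y, ∀ y ∈ Y, x ≠ y → δ ≤ dist x y) ∧
      (∀ x ∈ Y, ∃ s : ℕ → E n, (∀ j, s j ∈ X (φ j)) ∧
        Filter.Tendsto s Filter.atTop (nhds x)) ∧
      (∃ c' : ℝ, 0 < c' ∧ ∃ M₁ : ℝ, ∀ M : ℝ, M₁ ≤ M →
        c' * M^n ≤ ((Y ∩ Metric.ball 0 M).ncard : ℝ)) := by
  classical
  obtain ⟨K0, hK0⟩ := hcount (max M₀ 1) (le_max_left _ _)
  have hXne : ∀ k : ℕ, (X (k + K0)).Nonempty := by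
    intro k
    have h1 := hK0 (k + K0) (Nat.le_add_left _ _)
    have hpos : (0:ℝ) < c * (max M₀ 1)^n := by
      have h01 : (0:ℝ) < max M₀ 1 := lt_of_lt_of_le one_pos (le_max_right _ _)
      positivity
    have hne : (X (k + K0) ∩ ball 0 (max M₀ 1)).ncard ≠ 0 := by
      intro h; rw [h] at h1; norm_num at h1; linarith
    exact (Set.nonempty_of_ncard_ne_zero hne).mono Set.inter_subset_left
  choose N hN using fun m : ℕ => Stmt17Aux.packing n hδ ((m : ℝ) + 1)
  have hsepfin : ∀ k m : ℕ, (X (k+K0) ∩ ball 0 ((m:ℝ)+1)).Finite ∧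
      (X (k+K0) ∩ ball 0 ((m:ℝ)+1)).ncard ≤ N m := fun k m =>
    hN m _ (fun x hx y hy hxy => hsep _ x hx.1 y hy.1 hxy) Set.inter_subset_right
  have henum : ∀ k m : ℕ, ∃ f : ℕ → E n, (∀ i, f i ∈ X (k+K0)) ∧
      (X (k+K0) ∩ ball 0 ((m:ℝ)+1)) ⊆ f '' (Set.Iio (N m)) := fun k m =>
    Stmt17Aux.enum_exists _ _ (hXne k) (hsepfin k m).1 Set.inter_subset_left (N m) (hsepfin k m).2
  choose F hF hFcov using henum
  set f : ℕ → ℕ → E n := fun k p => F k p.unpair.1 p.unpair.2 with hfdef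
  have hfmem : ∀ k i, f k i ∈ X (k + K0) := fun k i => hF k _ _
  set I : ℕ → Set ℕ := fun m => (fun i => Nat.pair m i) '' Set.Iio (N m) with hIdef
  have hIfin : ∀ m, (I m).Finite := fun m => (Set.finite_Iio _).image _
  have hfcov : ∀ k m : ℕ, (X (k+K0) ∩ ball 0 ((m:ℝ)+1)) ⊆ f k '' I m := by
    intro k m a ha
    obtain ⟨i, hi, rfl⟩ := hFcov k m ha
    exact ⟨Nat.pair m i, ⟨i, hi, rfl⟩, by simp [hfdef, Nat.unpair_pair]⟩
  haveI : CompactSpace (closedBall (0 : E n) 1) :=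
    isCompact_iff_compactSpace.mp (isCompact_closedBall _ _)
  set G : ℕ → (ℕ → closedBall (0:E n) 1) :=
    fun k i => ⟨Stmt17Aux.hmap (f k i), Stmt17Aux.hmap_mem _⟩ with hGdef
  obtain ⟨L, ψ, hψ, hconv⟩ := CompactSpace.tendsto_subseq G
  have hpt : ∀ i : ℕ, Filter.Tendsto (fun j => Stmt17Aux.hmap (f (ψ j) i))
      Filter.atTop (nhds (L i : E n)) := by
    intro i
    have h1 : Filter.Tendsto (fun j => (G (ψ j)) i) Filter.atTop (nhds (L i)) :=
      tendsto_pi_nhds.mp hconv i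
    exact ((continuous_subtype_val.tendsto (L i)).comp h1)
  have hLle : ∀ i, ‖(L i : E n)‖ ≤ 1 := fun i => mem_closedBall_zero_iff.mp (L i).2
  set Y : Set (E n) :=
    {x | ∃ i : ℕ, Filter.Tendsto (fun j => f (ψ j) i) Filter.atTop (nhds x)} with hYdef
  set φ : ℕ → ℕ := fun j => ψ j + K0 with hφdef
  have hφmono : StrictMono φ := by
    intro a b h; simp only [hφdef]; exact Nat.add_lt_add_right (hψ h) K0
  have hYsep : ∀ x ∈ Y, ∀ y ∈ Y, x ≠ y → δ ≤ dist x y := by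
    rintro x ⟨i, hx⟩ y ⟨i', hy⟩ hxy
    have hd : Filter.Tendsto (fun j => dist (f (ψ j) i) (f (ψ j) i'))
        Filter.atTop (nhds (dist x y)) := hx.dist hy
    have hpos : 0 < dist x y := dist_pos.mpr hxy
    have hev : ∀ᶠ j in Filter.atTop, δ ≤ dist (f (ψ j) i) (f (ψ j) i') := by
      filter_upwards [hd.eventually_const_lt hpos] with j hj
      refine hsep _ _ (hfmem _ _) _ (hfmem _ _) ?_
      intro hh; rw [hh] at hj; simp at hj
    exact ge_of_tendsto hd hev
  have hcount' : ∀ M : ℝ, max (2*δ+4) (M₀+δ+2) ≤ M →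
      (c / 2^n) * M^n ≤ ((Y ∩ ball 0 M).ncard : ℝ) := by
    intro M hM
    have hM1 : 2*δ+4 ≤ M := le_trans (le_max_left _ _) hM
    have hM2 : M₀+δ+2 ≤ M := le_trans (le_max_right _ _) hM
    have hMpos : 0 < M := by linarith
    set m : ℕ := ⌊M - δ - 2⌋₊ with hm
    set r : ℝ := (m:ℝ) + 1 with hr
    have hfl1 : (m:ℝ) ≤ M - δ - 2 := Nat.floor_le (by linarith)
    have hfl2 : M - δ - 2 < (m:ℝ) + 1 := Nat.lt_floor_add_one _
    have hrM : r + δ/3 + δ/3 < M := by rw [hr]; linarith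
    have hr2 : M/2 ≤ r := by rw [hr]; linarith
    have hrM₀ : M₀ ≤ r := by rw [hr]; linarith
    have hrpos : 0 < r := by rw [hr]; positivity
    obtain ⟨k₀, hk₀⟩ := hcount r hrM₀
    have hevI : ∀ i ∈ I m, ∀ᶠ j in Filter.atTop,
        (‖(L i : E n)‖ < 1 → dist (f (ψ j) i) (Stmt17Aux.gmap (L i : E n)) < δ/3) ∧
        (‖(L i : E n)‖ = 1 → r < ‖f (ψ j) i‖) := by
      intro i _
      rcases lt_or_eq_of_le (hLle i) with h1 | h1
      · have ht := Stmt17Aux.tendsto_of_hmap_tendsto h1 (hpt i)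
        obtain ⟨Nj, hNj⟩ := Metric.tendsto_atTop.mp ht (δ/3) (by positivity)
        refine Filter.eventually_atTop.mpr ⟨Nj, fun j hj => ?_⟩
        exact ⟨fun _ => hNj j hj, fun he => absurd he (ne_of_lt h1)⟩
      · filter_upwards [Stmt17Aux.norm_blowup h1 (hpt i) r] with j hj
        exact ⟨fun hlt => absurd h1 (ne_of_lt hlt), fun _ => hj⟩
    have hev := (Filter.eventually_all_finite (hIfin m)).mpr hevI
    obtain ⟨j, hjall, hjk⟩ := (hev.and (Filter.eventually_ge_atTop k₀)).exists
    set k := ψ j with hk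
    have hkk : k₀ ≤ k + K0 := le_trans hjk (le_trans hψ.le_apply (Nat.le_add_right _ _))
    have hA := hk₀ (k + K0) hkk
    set A := X (k+K0) ∩ ball 0 r with hAdef
    have hkey : ∀ p ∈ A, ∃ q, (q ∈ Y ∩ ball 0 M) ∧ dist p q < δ/3 := by
      intro p hp
      have hp' : p ∈ X (k+K0) ∩ ball 0 ((m:ℝ)+1) := by rw [hAdef, hr] at hp; exact hp
      obtain ⟨i, hiI, hip⟩ := hfcov k m hp'
      have hcond := hjall i hiI
      have hp0 : dist p 0 < r := mem_ball.mp hp.2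
      have hlt : ‖(L i : E n)‖ < 1 := by
        rcases lt_or_eq_of_le (hLle i) with h1 | h1
        · exact h1
        · exfalso
          have h2 := hcond.2 h1
          rw [hip] at h2
          rw [dist_zero_right] at hp0
          linarith
      have hclose := hcond.1 hlt
      rw [hip] at hclose
      refine ⟨Stmt17Aux.gmap (L i : E n),
        ⟨⟨i, Stmt17Aux.tendsto_of_hmap_tendsto hlt (hpt i)⟩, ?_⟩, hclose⟩
      have htri : dist (Stmt17Aux.gmap (L i : E n)) 0 ≤
          dist (Stmt17Aux.gmap (L i : E n)) p + dist p 0 := dist_triangle _ _ _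
      rw [dist_comm (Stmt17Aux.gmap (L i : E n)) p] at htri
      rw [mem_ball]
      linarith
    choose! v hv using hkey
    obtain ⟨NM, hNM⟩ := Stmt17Aux.packing n hδ M
    have hYfin : (Y ∩ ball 0 M).Finite :=
      (hNM (Y ∩ ball 0 M) (fun x hx y hy => hYsep x hx.1 y hy.1) Set.inter_subset_right).1
    have hinj : Set.InjOn v A := by
      intro a ha b hb hab
      by_contra hne
      have hs := hsep (k+K0) a ha.1 b hb.1 hne
      have h1 := (hv a ha).2
      have h2 := (hv b hb).2
      have h2' : dist (v a) b < δ/3 := by rw [hab, dist_comm]; exact h2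
      linarith [dist_triangle a (v a) b]
    have hcard : A.ncard ≤ (Y ∩ ball 0 M).ncard :=
      Set.ncard_le_ncard_of_injOn v (fun a ha => (hv a ha).1) hinj hYfin
    have h5 : c * (M/2)^n ≤ c * r^n :=
      mul_le_mul_of_nonneg_left (pow_le_pow_left₀ (by linarith) hr2 n) hc.le
    have h6 : (c/2^n) * M^n = c * (M/2)^n := by rw [div_pow]; ring
    calc (c/2^n) * M^n = c * (M/2)^n := h6
      _ ≤ c * r^n := h5
      _ ≤ (A.ncard : ℝ) := hA
      _ ≤ ((Y ∩ ball 0 M).ncard : ℝ) := by exact_mod_cast hcard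
  have hc' : (0:ℝ) < c / 2^n := by positivity
  refine ⟨Y, φ, hφmono, ?_, hYsep, ?_, ⟨c/2^n, hc', max (2*δ+4) (M₀+δ+2), hcount'⟩⟩
  · by_contra hfin
    rw [Set.not_infinite] at hfin
    set M : ℝ := max (max (max (2*δ+4) (M₀+δ+2)) 1) (((Y.ncard:ℝ) + 1)/(c/2^n)) with hM
    have h := hcount' M (le_trans (le_max_left _ _) (le_max_left _ _))
    have hM1 : (1:ℝ) ≤ M := le_trans (le_max_right _ _) (le_max_left _ _)
    have hMc : ((Y.ncard:ℝ) + 1)/(c/2^n) ≤ M := le_max_right _ _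
    have h2 : ((Y.ncard:ℝ) + 1) ≤ (c/2^n) * M := by
      rw [div_le_iff₀ hc'] at hMc; linarith
    have h3 : M ≤ M^n := by
      calc M = M^1 := (pow_one M).symm
        _ ≤ M^n := pow_le_pow_right₀ hM1 hn
    have h4 : (c/2^n)*M ≤ (c/2^n)*M^n := mul_le_mul_of_nonneg_left h3 hc'.le
    have h5 : ((Y ∩ ball 0 M).ncard : ℝ) ≤ (Y.ncard:ℝ) := by
      exact_mod_cast Set.ncard_le_ncard Set.inter_subset_left hfin
    linarith
  · rintro x ⟨i, hx⟩
    exact ⟨fun j => f (ψ j) i, fun j => hfmem _ _, hx⟩
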